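/- For every real α with 0 < α < 1/2 and every ε > 0, there exists C such that for all integers c ≥ C and all integers k with αc < k < (1−α)c, one has |p_{k,c} − sin²((4k − 1)π / (8c + 4))| < ε. (In short: p_{k,c} = sin²((4k−1)π/(8c+4)) + o(1) as c → ∞, uniformly over k in the range αc < k < (1−α)c; this is the refined approximation underlying the discrete arcsine distributions.) -/

import Mathlib

open Real Polynomial

/-- The `c`-th Legendre polynomial, `P_c(x) = (1/(2^c c!)) (d/dx)^c (x² − 1)^c`,
viewed as a real function. -/
noncomputable def legendreP (c : ℕ) (t : ℝ) : ℝ :=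
  (1 / (2 ^ c * (Nat.factorial c : ℝ))) *
    iteratedDeriv c (fun s : ℝ => (s ^ 2 - 1) ^ c) t

/-- `x : ℕ → ℕ → ℝ` enumerates, for each `c ≥ 1`, the roots of the `c`-th Legendre
polynomial in `(−1, 1)` in increasing order: `x k c` is the `k`-th root
`x_{k,c}` (for `1 ≤ k ≤ c`), these are roots lying in `(−1,1)`, they are strictly
increasing in `k`, and every root of `P_c` in `(−1,1)` occurs among them. -/
def IsLegendreRootSystem (x : ℕ → ℕ → ℝ) : Prop :=
  ∀ c : ℕ, 1 ≤ c →
    (∀ k : ℕ, 1 ≤ k → k ≤ c → x k c ∈ Set.Ioo (-1 : ℝ) 1 ∧ legendreP c (x k c) = 0) ∧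
    (∀ k l : ℕ, 1 ≤ k → k < l → l ≤ c → x k c < x l c) ∧
    (∀ t ∈ Set.Ioo (-1 : ℝ) 1, legendreP c t = 0 → ∃ k : ℕ, 1 ≤ k ∧ k ≤ c ∧ x k c = t)

/-- The weight `w_{k,c} = 2 / ((1 − x_{k,c}²)^{3/2} · P_c′(x_{k,c})²)`. -/
noncomputable def wLeg (x : ℕ → ℕ → ℝ) (k c : ℕ) : ℝ :=
  2 / ((1 - x k c ^ 2) ^ ((3 : ℝ) / 2) * (deriv (legendreP c) (x k c)) ^ 2)

/-- The normalizing constant `N_c = Σ_{k=1}^c w_{k,c}`. -/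
noncomputable def NLeg (x : ℕ → ℕ → ℝ) (c : ℕ) : ℝ :=
  ∑ k ∈ Finset.Icc 1 c, wLeg x k c

private lemma iterD_add (m : ℕ) (p q : ℝ[X]) :
    derivative^[m] (p + q) = derivative^[m] p + derivative^[m] q := by
  induction m generalizing p q with
  | zero => rfl
  | succ m ih => rw [Function.iterate_succ_apply, derivative_add, ih,
      ← Function.iterate_succ_apply, ← Function.iterate_succ_apply]

private lemma iterX (m : ℕ) (p : ℝ[X]) :
    derivative^[m+1] (X * p) =
      X * derivative^[m+1] p + ((m:ℝ[X])+1) * derivative^[m] p := by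
  induction m generalizing p with
  | zero => simp [derivative_mul]; ring
  | succ m ih =>
      have e1 : derivative^[m+1+1] (X * p) = derivative^[m+1] (p + X * derivative p) := by
        rw [Function.iterate_succ_apply, derivative_mul, derivative_X, one_mul]
      rw [e1, iterD_add, ih (derivative p),
        ← Function.iterate_succ_apply, ← Function.iterate_succ_apply]
      push_cast
      set A1 := derivative^[m+1] p
      set A2 := derivative^[m+1+1] p
      ring

private lemma iterC_mul (m : ℕ) (a : ℝ) (p : ℝ[X]) :
    derivative^[m] (C a * p) = C a * derivative^[m] p :=
  Polynomial.iterate_derivative_C_mul a p m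

private lemma iterX2 (m : ℕ) (p : ℝ[X]) :
    derivative^[m+2] ((X^2 - 1) * p) =
      (X^2 - 1) * derivative^[m+2] p
        + (2*((m:ℝ[X])+2)) * (X * derivative^[m+1] p)
        + (((m:ℝ[X])+2)*((m:ℝ[X])+1)) * derivative^[m] p := by
  induction m generalizing p with
  | zero =>
      simp only [Function.iterate_succ_apply, Function.iterate_zero_apply]
      simp [derivative_mul, derivative_add, derivative_sub, derivative_X_pow, derivative_one,
        map_ofNat]
      ring
  | succ m ih =>
      have e1 : derivative^[m+1+2] ((X^2-1) * p)
          = derivative^[m+2] (C 2 * (X * p) + (X^2-1) * derivative p) := by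
        rw [Function.iterate_succ_apply]
        congr 1
        rw [derivative_mul]
        simp [derivative_sub, derivative_X_pow]
        rw [show (C (2:ℝ) : ℝ[X]) = 2 from map_ofNat _ 2]
        ring
      rw [e1, iterD_add, iterC_mul, ih (derivative p), iterX (m+1) p,
        ← Function.iterate_succ_apply, ← Function.iterate_succ_apply,
        ← Function.iterate_succ_apply]
      push_cast
      set A1 := derivative^[m+1] p
      set A2 := derivative^[m+1+1] p
      set A3 := derivative^[m+1+2] p
      rw [show (C (2:ℝ) : ℝ[X]) = 2 from map_ofNat _ 2]
      ring

noncomputable def legPoly (c : ℕ) : ℝ[X] := derivative^[c] (((X:ℝ[X])^2 - 1)^c)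

private lemma legODE (m : ℕ) :
    (X^2 - 1) * derivative (derivative (legPoly (m+1)))
      + 2 * X * derivative (legPoly (m+1))
      = (((m:ℝ[X])+1) * ((m:ℝ[X])+2)) * legPoly (m+1) := by
  set y : ℝ[X] := ((X:ℝ[X])^2 - 1)^(m+1) with hy
  have hdy : derivative y = C (2*((m:ℝ)+1)) * (X * ((X:ℝ[X])^2-1)^m) := by
    rw [hy, derivative_pow]
    simp [derivative_sub, derivative_X_pow]
    push_cast
    rw [show (C (2:ℝ) : ℝ[X]) = 2 from map_ofNat _ 2]
    ring
  have h1 : (X^2 - 1) * derivative y = C (2*((m:ℝ)+1)) * (X * y) := by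
    rw [hdy, hy]
    ring
  have h2 := congrArg (derivative^[m+2]) h1
  rw [iterX2 m (derivative y), iterC_mul, iterX (m+1) y] at h2
  have e1 : derivative^[m] (derivative y) = derivative^[m+1] y :=
    (Function.iterate_succ_apply _ _ _).symm
  have e2 : derivative^[m+1] (derivative y) = derivative^[m+2] y :=
    (Function.iterate_succ_apply derivative (m+1) y).symm
  have e3 : derivative^[m+2] (derivative y) = derivative^[m+3] y :=
    (Function.iterate_succ_apply derivative (m+2) y).symm
  rw [e1, e2, e3] at h2
  have eL : legPoly (m+1) = derivative^[m+1] y := rfl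
  have eL1 : derivative (legPoly (m+1)) = derivative^[m+2] y :=
    (Function.iterate_succ_apply' derivative (m+1) y).symm
  have eL2 : derivative (derivative (legPoly (m+1))) = derivative^[m+3] y := by
    rw [eL1]; exact (Function.iterate_succ_apply' derivative (m+2) y).symm
  rw [eL2, eL1, eL]
  have hC : (C (2*((m:ℝ)+1)) : ℝ[X]) = 2*((m:ℝ[X])+1) := by
    rw [C_mul, C_add, C_1, show (C (2:ℝ) : ℝ[X]) = 2 from map_ofNat _ 2, C_eq_natCast]
  rw [hC] at h2
  set A1 := derivative^[m+1] y
  set A2 := derivative^[m+2] y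
  set A3 := derivative^[m+3] y
  push_cast at h2 ⊢
  linear_combination h2

private lemma iteratedDeriv_eval (k : ℕ) (p : ℝ[X]) :
    iteratedDeriv k (fun s : ℝ => p.eval s) = fun s => (derivative^[k] p).eval s := by
  induction k generalizing p with
  | zero => simp
  | succ k ih =>
      rw [iteratedDeriv_succ, ih]
      funext s
      rw [Function.iterate_succ_apply']
      exact Polynomial.deriv (derivative^[k] p) -- hope name/arg form

private lemma legendreP_eq (c : ℕ) (t : ℝ) :
    legendreP c t = (1 / (2 ^ c * (Nat.factorial c : ℝ))) * (legPoly c).eval t := by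
  unfold legendreP legPoly
  congr 1
  have : (fun s : ℝ => (s ^ 2 - 1) ^ c) = fun s => (((X:ℝ[X])^2 - 1)^c).eval s := by
    funext s; simp
  rw [this, iteratedDeriv_eval]

/-- zeros of legendreP are zeros of legPoly -/
private lemma legendreP_zero_iff (c : ℕ) (t : ℝ) :
    legendreP c t = 0 ↔ (legPoly c).eval t = 0 := by
  rw [legendreP_eq]
  have h : (1 / (2 ^ c * (Nat.factorial c : ℝ))) ≠ 0 := by positivity
  constructor
  · intro h0; rcases mul_eq_zero.1 h0 with h' | h'
    · exact absurd h' h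
    · exact h'
  · intro h0; rw [h0, mul_zero]

/-- real ODE for g = eval of legPoly (c = m+1) -/
private lemma legODE_real (m : ℕ) (t : ℝ) :
    (t^2 - 1) * (derivative (derivative (legPoly (m+1)))).eval t
      + 2 * t * (derivative (legPoly (m+1))).eval t
      = (((m:ℝ)+1) * ((m:ℝ)+2)) * (legPoly (m+1)).eval t := by
  have := congrArg (fun p : ℝ[X] => p.eval t) (legODE m)
  simpa using this

noncomputable def uu (c : ℕ) (θ : ℝ) : ℝ := √(sin θ) * (legPoly c).eval (cos θ)

noncomputable def AA (c : ℕ) (θ : ℝ) : ℝ :=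
  cos θ * (legPoly c).eval (cos θ) / (2 * √(sin θ))
    - √(sin θ) * (sin θ * (derivative (legPoly c)).eval (cos θ))

noncomputable def QQ (c : ℕ) (θ : ℝ) : ℝ := ((c:ℝ) + 1/2)^2 + 1/(4 * sin θ^2)

private lemma hasDerivAt_sqrt_sin {θ : ℝ} (hθ : θ ∈ Set.Ioo 0 π) :
    HasDerivAt (fun t => √(sin t)) (cos θ / (2 * √(sin θ))) θ := by
  have hs : 0 < sin θ := Real.sin_pos_of_pos_of_lt_pi hθ.1 hθ.2
  have h := (Real.hasDerivAt_sqrt hs.ne').comp θ (Real.hasDerivAt_sin θ)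
  refine h.congr_deriv ?_
  simp [Function.comp]
  ring

private lemma hasDerivAt_evalcos {θ : ℝ} (p : ℝ[X]) :
    HasDerivAt (fun t => p.eval (cos t)) (-(sin θ) * (derivative p).eval (cos θ)) θ := by
  have h := (p.hasDerivAt (cos θ)).comp θ (Real.hasDerivAt_cos θ)
  refine h.congr_deriv ?_
  ring

private lemma hasDerivAt_uu {c : ℕ} {θ : ℝ} (hθ : θ ∈ Set.Ioo 0 π) :
    HasDerivAt (uu c) (AA c θ) θ := by
  have h := (hasDerivAt_sqrt_sin hθ).mul (hasDerivAt_evalcos (θ := θ) (legPoly c))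
  refine h.congr_deriv ?_
  unfold AA
  ring

private lemma hasDerivAt_AA {m : ℕ} {θ : ℝ} (hθ : θ ∈ Set.Ioo 0 π) :
    HasDerivAt (AA (m+1)) (-(QQ (m+1) θ) * uu (m+1) θ) θ := by
  have hs : 0 < sin θ := Real.sin_pos_of_pos_of_lt_pi hθ.1 hθ.2
  have hrpos : 0 < √(sin θ) := Real.sqrt_pos.2 hs
  have hr2 : √(sin θ)^2 = sin θ := Real.sq_sqrt hs.le
  have hD0 : 2 * √(sin θ) ≠ 0 := by positivity
  have hN : HasDerivAt (fun t => cos t * (legPoly (m+1)).eval (cos t))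
      (-(sin θ) * (legPoly (m+1)).eval (cos θ)
        + cos θ * (-(sin θ) * (derivative (legPoly (m+1))).eval (cos θ))) θ :=
    (Real.hasDerivAt_cos θ).mul (hasDerivAt_evalcos _)
  have hD : HasDerivAt (fun t => 2 * √(sin t)) (2 * (cos θ / (2 * √(sin θ)))) θ :=
    (hasDerivAt_sqrt_sin hθ).const_mul 2
  have hterm1 := hN.div hD hD0
  have hinner : HasDerivAt (fun t => sin t * (derivative (legPoly (m+1))).eval (cos t))
      (cos θ * (derivative (legPoly (m+1))).eval (cos θ)
        + sin θ * (-(sin θ) * (derivative (derivative (legPoly (m+1)))).eval (cos θ))) θ :=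
    (Real.hasDerivAt_sin θ).mul (hasDerivAt_evalcos _)
  have hterm2 := (hasDerivAt_sqrt_sin hθ).mul hinner
  have h := hterm1.sub hterm2
  refine h.congr_deriv ?_
  have hODE : sin θ^2 * (derivative (derivative (legPoly (m+1)))).eval (cos θ)
      = 2*(cos θ)*(derivative (legPoly (m+1))).eval (cos θ)
        - (((m:ℝ)+1)*((m:ℝ)+2)) * (legPoly (m+1)).eval (cos θ) := by
    have h' := legODE_real m (cos θ)
    linear_combination (-1 : ℝ) * h'
      + ((derivative (derivative (legPoly (m+1)))).eval (cos θ)) * Real.sin_sq_add_cos_sq θ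
  unfold QQ uu
  set g0c := (legPoly (m+1)).eval (cos θ) with hg0
  set g1c := (derivative (legPoly (m+1))).eval (cos θ) with hg1
  set g2c := (derivative (derivative (legPoly (m+1)))).eval (cos θ) with hg2
  set r := √(sin θ) with hrdef
  have hrne : r ≠ 0 := hrpos.ne'
  have hsin : sin θ = r^2 := hr2.symm
  have hpy : r^2*r^2 + cos θ^2 = 1 := by
    rw [← hsin]; linear_combination Real.sin_sq_add_cos_sq θ
  have hODE' : r^2*r^2 * g2c = 2*(cos θ)*g1c - (((m:ℝ)+1)*((m:ℝ)+2)) * g0c := by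
    rw [← hsin]; linear_combination hODE
  rw [hsin]
  push_cast
  field_simp
  linear_combination (16 * r^4) * hODE' + (-4 * g0c) * hpy

private lemma sturm_no_pos {N a b : ℝ} (hN : 0 < N) (hb : b = a + π/N)
    {u A Q : ℝ → ℝ}
    (hu : ∀ θ ∈ Set.Icc a b, HasDerivAt u (A θ) θ)
    (hA : ∀ θ ∈ Set.Icc a b, HasDerivAt A (-(Q θ) * u θ) θ)
    (hQ : ∀ θ ∈ Set.Icc a b, N^2 ≤ Q θ)
    (hpos : ∀ θ ∈ Set.Icc a b, 0 < u θ) : False := by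
  have hab : a < b := by
    have : 0 < π / N := div_pos Real.pi_pos hN
    rw [hb]; linarith
  set W : ℝ → ℝ := fun θ => u θ * (N * cos (N*(θ-a))) - A θ * sin (N*(θ-a)) with hW
  have hWd : ∀ θ ∈ Set.Icc a b,
      HasDerivAt W ((Q θ - N^2) * u θ * sin (N*(θ-a))) θ := by
    intro θ hθ
    have hlin : HasDerivAt (fun t : ℝ => N*(t-a)) N θ := by
      simpa using ((hasDerivAt_id θ).sub_const a).const_mul N
    have hcos : HasDerivAt (fun t => cos (N*(t-a))) (-sin (N*(θ-a)) * N) θ :=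
      by have h := (Real.hasDerivAt_cos (N*(θ-a))).comp θ hlin; exact h
    have hsin : HasDerivAt (fun t => sin (N*(t-a))) (cos (N*(θ-a)) * N) θ :=
      by have h := (Real.hasDerivAt_sin (N*(θ-a))).comp θ hlin; exact h
    have h1 := (hu θ hθ).mul (hcos.const_mul N)
    have h2 := (hA θ hθ).mul hsin
    have := h1.sub h2
    refine this.congr_deriv ?_
    ring
  have hWc : ContinuousOn W (Set.Icc a b) := fun θ hθ =>
    ((hWd θ hθ).continuousAt).continuousWithinAt
  have hmono : MonotoneOn W (Set.Icc a b) := by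
    apply monotoneOn_of_deriv_nonneg (convex_Icc a b) hWc
    · intro θ hθ
      rw [interior_Icc] at hθ
      exact ((hWd θ (Set.Ioo_subset_Icc_self hθ)).differentiableAt).differentiableWithinAt
    · intro θ hθ
      rw [interior_Icc] at hθ
      have hθ' := Set.Ioo_subset_Icc_self hθ
      rw [(hWd θ hθ').deriv]
      have h1 : 0 ≤ Q θ - N^2 := sub_nonneg.2 (hQ θ hθ')
      have h2 : 0 < u θ := hpos θ hθ'
      have h3 : 0 ≤ sin (N*(θ-a)) := by
        apply Real.sin_nonneg_of_nonneg_of_le_pi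
        · have := hθ.1; nlinarith
        · have h4 : θ - a ≤ π / N := by rw [hb] at hθ; have := hθ.2.le; linarith
          calc N * (θ - a) ≤ N * (π/N) := by
                apply mul_le_mul_of_nonneg_left h4 hN.le
            _ = π := by field_simp
      positivity
  have hWa : W a = N * u a := by simp [hW]; ring
  have hWb : W b = -(N * u b) := by
    have hNb : N * (b - a) = π := by rw [hb]; field_simp; ring
    simp [hW, hNb]; ring
  have hle := hmono (Set.left_mem_Icc.2 hab.le) (Set.right_mem_Icc.2 hab.le) hab.le
  have h1 : 0 < u a := hpos a (Set.left_mem_Icc.2 hab.le)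
  have h2 : 0 < u b := hpos b (Set.right_mem_Icc.2 hab.le)
  rw [hWa, hWb] at hle
  nlinarith

private lemma sturm_pos_case {N a b : ℝ} (hN : 0 < N) (hb : b = a + π/N)
    {u A Q : ℝ → ℝ}
    (hu : ∀ θ ∈ Set.Icc a b, HasDerivAt u (A θ) θ)
    (hA : ∀ θ ∈ Set.Icc a b, HasDerivAt A (-(Q θ) * u θ) θ)
    (hQ : ∀ θ ∈ Set.Icc a b, N^2 ≤ Q θ)
    (hua : 0 < u a)
    (hno : ∀ z ∈ Set.Ioc a b, u z ≠ 0) : False := by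
  have hab : a < b := by
    have : 0 < π / N := div_pos Real.pi_pos hN
    rw [hb]; linarith
  have hpos : ∀ θ ∈ Set.Icc a b, 0 < u θ := by
    intro θ hθ
    rcases eq_or_lt_of_le hθ.1 with rfl | hlt
    · exact hua
    by_contra hle
    push_neg at hle
    have hne : u θ ≠ 0 := hno θ ⟨hlt, hθ.2⟩
    have hneg : u θ < 0 := lt_of_le_of_ne hle hne
    have hcont : ContinuousOn u (Set.Icc a θ) := by
      intro z hz
      exact ((hu z ⟨hz.1, le_trans hz.2 hθ.2⟩).continuousAt).continuousWithinAt
    have hiv := intermediate_value_Icc' hlt.le hcont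
    have h0 : (0:ℝ) ∈ Set.Icc (u θ) (u a) := ⟨hneg.le, hua.le⟩
    obtain ⟨z, hz, hz0⟩ := hiv h0
    have hzne : z ≠ a := by rintro rfl; rw [hz0] at hua; exact lt_irrefl _ hua
    exact hno z ⟨lt_of_le_of_ne hz.1 (Ne.symm hzne), le_trans hz.2 hθ.2⟩ hz0
  exact sturm_no_pos hN hb hu hA hQ hpos

private lemma sturm_zero {N a b : ℝ} (hN : 0 < N) (hb : b = a + π/N)
    {u A Q : ℝ → ℝ}
    (hu : ∀ θ ∈ Set.Icc a b, HasDerivAt u (A θ) θ)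
    (hA : ∀ θ ∈ Set.Icc a b, HasDerivAt A (-(Q θ) * u θ) θ)
    (hQ : ∀ θ ∈ Set.Icc a b, N^2 ≤ Q θ)
    (hua : u a ≠ 0) :
    ∃ z ∈ Set.Ioc a b, u z = 0 := by
  by_contra hcon
  push_neg at hcon
  rcases lt_or_gt_of_ne hua with hneg | hpos
  · apply sturm_pos_case (u := fun θ => -(u θ)) (A := fun θ => -(A θ)) (Q := Q) hN hb
    · intro θ hθ; exact (hu θ hθ).neg
    · intro θ hθ
      have := (hA θ hθ).neg
      refine this.congr_deriv ?_
      ring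
    · exact hQ
    · simpa using hneg
    · intro z hz h0
      exact hcon z hz (by simpa using h0)
  · exact sturm_pos_case hN hb hu hA hQ hpos hcon

noncomputable def tau (x : ℕ → ℕ → ℝ) (c j : ℕ) : ℝ := Real.arccos (x (c + 1 - j) c)

section roots
variable {x : ℕ → ℕ → ℝ} (hx : IsLegendreRootSystem x) {c : ℕ} (hc : 1 ≤ c)
include hx hc

private lemma tau_mem {j : ℕ} (hj1 : 1 ≤ j) (hjc : j ≤ c) :
    tau x c j ∈ Set.Ioo 0 π ∧ uu c (tau x c j) = 0 := by
  have hk1 : 1 ≤ c + 1 - j := by omega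
  have hkc : c + 1 - j ≤ c := by omega
  obtain ⟨hmem, hzero⟩ := (hx c hc).1 (c+1-j) hk1 hkc
  have hmem' : x (c+1-j) c ∈ Set.Icc (-1:ℝ) 1 := ⟨hmem.1.le, hmem.2.le⟩
  constructor
  · constructor
    · exact Real.arccos_pos.2 hmem.2
    · refine lt_of_le_of_ne (Real.arccos_le_pi _) (fun hpi => ?_)
      have : x (c+1-j) c = -1 := by
        have hct : cos (tau x c j) = x (c+1-j) c := Real.cos_arccos hmem'.1 hmem'.2
        rw [hpi, Real.cos_pi] at hct
        linarith
      linarith [hmem.1]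
  · show √(sin (tau x c j)) * (legPoly c).eval (cos (tau x c j)) = 0
    have hct : cos (tau x c j) = x (c+1-j) c := Real.cos_arccos hmem'.1 hmem'.2
    rw [hct, (legendreP_zero_iff c _).1 hzero, mul_zero]

private lemma tau_mono {i j : ℕ} (hi1 : 1 ≤ i) (hij : i < j) (hjc : j ≤ c) :
    tau x c i < tau x c j := by
  have h1 : 1 ≤ c + 1 - j := by omega
  have h2 : c + 1 - j < c + 1 - i := by omega
  have h3 : c + 1 - i ≤ c := by omega
  have hlt := (hx c hc).2.1 (c+1-j) (c+1-i) h1 h2 h3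
  have ma := ((hx c hc).1 (c+1-i) (by omega) h3).1
  have mb := ((hx c hc).1 (c+1-j) h1 (by omega)).1
  exact Real.strictAntiOn_arccos ⟨mb.1.le, mb.2.le⟩ ⟨ma.1.le, ma.2.le⟩ hlt

private lemma tau_all {θ : ℝ} (hθ : θ ∈ Set.Ioo 0 π) (h0 : uu c θ = 0) :
    ∃ j, 1 ≤ j ∧ j ≤ c ∧ tau x c j = θ := by
  have hs : 0 < sin θ := Real.sin_pos_of_pos_of_lt_pi hθ.1 hθ.2
  have hr : √(sin θ) ≠ 0 := by positivity
  have hg : (legPoly c).eval (cos θ) = 0 := by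
    unfold uu at h0
    rcases mul_eq_zero.1 h0 with h | h
    · exact absurd h hr
    · exact h
  have hcos : cos θ ∈ Set.Ioo (-1:ℝ) 1 := by
    have hmemθ : θ ∈ Set.Icc (0:ℝ) π := ⟨hθ.1.le, hθ.2.le⟩
    have hc1 : cos θ < cos 0 :=
      Real.strictAntiOn_cos ⟨le_refl 0, Real.pi_pos.le⟩ hmemθ hθ.1
    have hc2 : cos π < cos θ :=
      Real.strictAntiOn_cos hmemθ ⟨Real.pi_pos.le, le_refl π⟩ hθ.2
    rw [Real.cos_zero] at hc1
    rw [Real.cos_pi] at hc2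
    exact ⟨hc2, hc1⟩
  have hP : legendreP c (cos θ) = 0 := (legendreP_zero_iff c _).2 hg
  obtain ⟨k, hk1, hkc, hkθ⟩ := (hx c hc).2.2 (cos θ) hcos hP
  refine ⟨c + 1 - k, by omega, by omega, ?_⟩
  have hkk : c + 1 - (c + 1 - k) = k := by omega
  unfold tau
  rw [hkk, hkθ]
  exact Real.arccos_cos hθ.1.le hθ.2.le
end roots

private lemma QQ_ge {c : ℕ} {θ : ℝ} (hθ : θ ∈ Set.Ioo 0 π) :
    ((c:ℝ) + 1/2)^2 ≤ QQ c θ := by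
  have hs : 0 < sin θ := Real.sin_pos_of_pos_of_lt_pi hθ.1 hθ.2
  unfold QQ
  have : 0 < 1/(4 * sin θ^2) := by positivity
  linarith

section roots
variable {x : ℕ → ℕ → ℝ} (hx : IsLegendreRootSystem x) {c : ℕ} (hc : 1 ≤ c)
include hx hc

private lemma gap {a0 z0 : ℝ} (ha0 : 0 ≤ a0) (hz0 : z0 ≤ π) (haz : a0 < z0)
    (hno : ∀ θ, a0 < θ → θ < z0 → uu c θ ≠ 0) :
    z0 - a0 ≤ π / ((c:ℝ) + 1/2) := by
  obtain ⟨m, rfl⟩ : ∃ m, c = m + 1 := ⟨c - 1, by omega⟩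
  set N : ℝ := ((m+1:ℕ):ℝ) + 1/2 with hNdef
  have hN : 0 < N := by rw [hNdef]; positivity
  by_contra hcon
  push_neg at hcon
  set a : ℝ := a0 + (z0 - a0 - π/N)/2 with hadef
  clear_value a
  have ha : a0 < a := by
    have : 0 < z0 - a0 - π/N := by linarith
    rw [hadef]; linarith
  have hb : a + π/N < z0 := by rw [hadef]; linarith
  have hsub : Set.Icc a (a + π/N) ⊆ Set.Ioo 0 π := by
    intro θ hθ
    constructor
    · linarith [hθ.1]
    · linarith [hθ.2]
  obtain ⟨z, hz, hz0'⟩ := sturm_zero (u := uu (m+1)) (A := AA (m+1)) (Q := QQ (m+1))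
    hN rfl
    (fun θ hθ => hasDerivAt_uu (hsub hθ))
    (fun θ hθ => by
      have h := hasDerivAt_AA (m := m) (hsub hθ)
      convert h using 2 <;> push_cast <;> ring_nf)
    (fun θ hθ => by
      have := QQ_ge (c := m+1) (hsub hθ)
      calc N^2 = (((m+1:ℕ):ℝ) + 1/2)^2 := by rw [hNdef]
        _ ≤ QQ (m+1) θ := this)
    (hno a ha (by linarith [div_pos Real.pi_pos hN]))
  exact hno z (lt_trans ha hz.1) (lt_of_le_of_lt hz.2 hb) hz0'
end roots

section roots2
variable {x : ℕ → ℕ → ℝ} (hx : IsLegendreRootSystem x) {c : ℕ} (hc : 1 ≤ c)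
include hx hc

private lemma tau_le_tau {i j : ℕ} (hi : 1 ≤ i) (hij : i ≤ j) (hjc : j ≤ c) :
    tau x c i ≤ tau x c j := by
  rcases Nat.eq_or_lt_of_le hij with rfl | hlt
  · exact le_refl _
  · exact (tau_mono hx hc hi hlt hjc).le

private lemma no_zero_low : ∀ θ, 0 < θ → θ < tau x c 1 → uu c θ ≠ 0 := by
  intro θ h1 h2 h0
  have hθ : θ ∈ Set.Ioo 0 π := ⟨h1, h2.trans (tau_mem hx hc (le_refl 1) hc).1.2⟩
  obtain ⟨j, hj1, hjc, hjθ⟩ := tau_all hx hc hθ h0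
  have := tau_le_tau hx hc (le_refl 1) hj1 hjc
  rw [hjθ] at this
  linarith

private lemma no_zero_high : ∀ θ, tau x c c < θ → θ < π → uu c θ ≠ 0 := by
  intro θ h1 h2 h0
  have hθ : θ ∈ Set.Ioo 0 π := ⟨lt_trans (tau_mem hx hc hc (le_refl c)).1.1 h1, h2⟩
  obtain ⟨j, hj1, hjc, hjθ⟩ := tau_all hx hc hθ h0
  have := tau_le_tau hx hc hj1 hjc (le_refl c)
  rw [hjθ] at this
  linarith

private lemma no_zero_between {i : ℕ} (hi : 1 ≤ i) (hic : i + 1 ≤ c) :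
    ∀ θ, tau x c i < θ → θ < tau x c (i+1) → uu c θ ≠ 0 := by
  intro θ h1 h2 h0
  have hθ : θ ∈ Set.Ioo 0 π :=
    ⟨lt_trans (tau_mem hx hc hi (by omega)).1.1 h1,
     h2.trans (tau_mem hx hc (by omega) hic).1.2⟩
  obtain ⟨j, hj1, hjc, hjθ⟩ := tau_all hx hc hθ h0
  rcases le_or_gt j i with hle | hgt
  · have := tau_le_tau hx hc hj1 hle (by omega)
    rw [hjθ] at this
    linarith
  · have := tau_le_tau hx hc (by omega : 1 ≤ i+1) hgt hjc
    rw [hjθ] at this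
    linarith

private lemma tau_upper : ∀ j, 1 ≤ j → j ≤ c → tau x c j ≤ (j:ℝ) * (π/((c:ℝ)+1/2)) := by
  intro j
  induction j with
  | zero => omega
  | succ n ih =>
      intro _ hnc
      by_cases hn : n = 0
      · subst hn
        have hg := gap hx hc (le_refl (0:ℝ)) (tau_mem hx hc (le_refl 1) hnc).1.2.le
          (tau_mem hx hc (le_refl 1) hnc).1.1 (no_zero_low hx hc)
        push_cast
        linarith
      · have hn1 : 1 ≤ n := by omega
        have hstep := gap hx hc (tau_mem hx hc hn1 (by omega)).1.1.le
          (tau_mem hx hc (by omega : 1 ≤ n+1) hnc).1.2.le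
          (tau_mono hx hc hn1 (by omega) hnc)
          (no_zero_between hx hc hn1 hnc)
        have hih := ih hn1 (by omega)
        push_cast
        push_cast at hih
        linarith

private lemma tau_lower_aux : ∀ m', m' + 1 ≤ c →
    π - tau x c (c - m') ≤ ((m':ℝ)+1) * (π/((c:ℝ)+1/2)) := by
  intro m'
  induction m' with
  | zero =>
      intro _
      have hcc : c - 0 = c := by omega
      rw [hcc]
      have hg := gap hx hc (tau_mem hx hc hc (le_refl c)).1.1.le (le_refl π)
        (tau_mem hx hc hc (le_refl c)).1.2 (no_zero_high hx hc)
      push_cast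
      linarith
  | succ n ih =>
      intro hnc
      have hi : 1 ≤ c - n - 1 := by omega
      have hieq : (c - n - 1) + 1 = c - n := by omega
      have hstep := gap hx hc (tau_mem hx hc hi (by omega)).1.1.le
        (tau_mem hx hc (by omega : 1 ≤ c - n) (by omega)).1.2.le
        (by
          have := tau_mono hx hc hi (by omega : c - n - 1 < c - n) (by omega)
          exact this)
        (by
          have hnz := no_zero_between hx hc hi (by omega : (c - n - 1) + 1 ≤ c)
          rw [hieq] at hnz
          exact hnz)
      have hih := ih (by omega)
      have heq2 : c - (n+1) = c - n - 1 := by omega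
      rw [heq2]
      push_cast
      push_cast at hih
      linarith
end roots2

private lemma tau_bound {x : ℕ → ℕ → ℝ} (hx : IsLegendreRootSystem x) {c : ℕ} (hc : 1 ≤ c)
    {j : ℕ} (hj1 : 1 ≤ j) (hjc : j ≤ c) :
    ((j:ℝ) - 1/2) * (π/((c:ℝ)+1/2)) ≤ tau x c j ∧
      tau x c j ≤ (j:ℝ) * (π/((c:ℝ)+1/2)) := by
  have hU := tau_upper hx hc j hj1 hjc
  have hL := tau_lower_aux hx hc (c - j) (by omega)
  have hcj : c - (c - j) = j := by omega
  rw [hcj] at hL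
  have hcast : ((c - j : ℕ):ℝ) = (c:ℝ) - (j:ℝ) := by
    push_cast [Nat.cast_sub hjc]; ring
  rw [hcast] at hL
  have hNpi : ((c:ℝ)+1/2) * (π/((c:ℝ)+1/2)) = π := by
    have : ((c:ℝ)+1/2) ≠ 0 := by positivity
    field_simp
  constructor
  · nlinarith [hL, hNpi]
  · exact hU


/-- Refined approximation: `p_{k,c} = sin²((4k−1)π/(8c+4)) + o(1)` as `c → ∞`,
uniformly over `k` with `αc < k < (1−α)c`. -/
theorem p_refined_asymptotics (x : ℕ → ℕ → ℝ) (hx : IsLegendreRootSystem x)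
    (α : ℝ) (hα0 : 0 < α) (hα1 : α < 1 / 2) (ε : ℝ) (hε : 0 < ε) :
    ∃ C : ℕ, ∀ c : ℕ, C ≤ c → ∀ k : ℕ,
      α * (c : ℝ) < (k : ℝ) → (k : ℝ) < (1 - α) * (c : ℝ) →
      |(x k c + 1) / 2 -
        Real.sin ((4 * (k : ℝ) - 1) * π / (8 * (c : ℝ) + 4)) ^ 2| < ε := by
  refine ⟨max 1 (⌈π/ε⌉₊ + 1), fun c hC k hk1' hk2' => ?_⟩
  have hc : 1 ≤ c := le_trans (le_max_left _ _) hC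
  have hcR : (1:ℝ) ≤ (c:ℝ) := by exact_mod_cast hc
  have hk0 : (0:ℝ) < (k:ℝ) := lt_trans (by positivity) hk1'
  have hk1 : 1 ≤ k := by exact_mod_cast Nat.one_le_iff_ne_zero.2 (by
    intro h; rw [h] at hk0; simp at hk0)
  have hkltc : (k:ℝ) < (c:ℝ) := by nlinarith
  have hkc : k ≤ c := le_of_lt (by exact_mod_cast hkltc)
  set j : ℕ := c + 1 - k with hjdef
  have hj1 : 1 ≤ j := by omega
  have hjc : j ≤ c := by omega
  have hkj : c + 1 - j = k := by omega
  -- the root and its angle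
  have hmem := ((hx c hc).1 k hk1 hkc).1
  have hxcos : x k c = cos (tau x c j) := by
    unfold tau
    rw [hkj, Real.cos_arccos hmem.1.le hmem.2.le]
  set t : ℝ := π/((c:ℝ)+1/2) with htdef
  have ht0 : 0 < t := by rw [htdef]; positivity
  obtain ⟨hL, hU⟩ := tau_bound hx hc hj1 hjc
  set T : ℝ := ((j:ℝ) - 1/4) * t with hTdef
  have habs : |tau x c j - T| ≤ t/4 := by
    rw [abs_le]
    constructor <;> [skip; skip] <;> rw [hTdef] <;> [linarith; linarith]
  -- T = π - 2φ
  set φ : ℝ := (4 * (k : ℝ) - 1) * π / (8 * (c : ℝ) + 4) with hφdef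
  have hjcast : ((j:ℕ):ℝ) = (c:ℝ) + 1 - (k:ℝ) := by
    rw [hjdef]
    push_cast [Nat.cast_sub (by omega : k ≤ c + 1)]
    ring
  have hTφ : 2*φ = π - T := by
    rw [hTdef, hφdef, htdef, hjcast]
    have h1 : (8 * (c:ℝ) + 4) ≠ 0 := by positivity
    have h2 : ((c:ℝ)+1/2) ≠ 0 := by positivity
    field_simp
    ring
  have hsinsq : sin φ ^ 2 = 1/2 - cos (2*φ)/2 := Real.sin_sq_eq_half_sub φ
  have hcos2φ : cos (2*φ) = -cos T := by rw [hTφ, Real.cos_pi_sub]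
  have hcoslip : |cos (tau x c j) - cos T| ≤ |tau x c j - T| := by
    rw [Real.cos_sub_cos]
    calc |(-2) * sin ((tau x c j + T)/2) * sin ((tau x c j - T)/2)|
        = 2 * |sin ((tau x c j + T)/2)| * |sin ((tau x c j - T)/2)| := by
          rw [abs_mul, abs_mul]; norm_num
      _ ≤ 2 * 1 * |(tau x c j - T)/2| := by
          have b1 : (2:ℝ) * |sin ((tau x c j + T)/2)| ≤ 2 * 1 := by
            have := Real.abs_sin_le_one ((tau x c j + T)/2)
            linarith
          exact mul_le_mul b1 Real.abs_sin_le_abs (abs_nonneg _) (by norm_num)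
      _ = |tau x c j - T| := by rw [abs_div]; norm_num [abs_of_nonneg]; ring
  have hmain : |(x k c + 1) / 2 - sin φ ^ 2| ≤ t/8 := by
    rw [hxcos, hsinsq, hcos2φ]
    have : (cos (tau x c j) + 1)/2 - (1/2 - (-cos T)/2)
        = (cos (tau x c j) - cos T)/2 := by ring
    rw [this, abs_div]
    have h2 : |(2:ℝ)| = 2 := by norm_num
    rw [h2]
    linarith
  -- conclude
  have hCe : (π/ε) < ((max 1 (⌈π/ε⌉₊ + 1) : ℕ) : ℝ) := by
    have h1 : (π/ε) ≤ (⌈π/ε⌉₊ : ℝ) := Nat.le_ceil _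
    have h2 : ((⌈π/ε⌉₊ : ℕ):ℝ) < ((⌈π/ε⌉₊ + 1 : ℕ):ℝ) := by exact_mod_cast Nat.lt_succ_self _
    have h3 : ((⌈π/ε⌉₊ + 1 : ℕ):ℝ) ≤ ((max 1 (⌈π/ε⌉₊ + 1) : ℕ):ℝ) := by
      exact_mod_cast le_max_right _ _
    linarith
  have hcC : ((max 1 (⌈π/ε⌉₊ + 1) : ℕ):ℝ) ≤ (c:ℝ) := by exact_mod_cast hC
  have hπc : π < ε * (c:ℝ) := by
    have := lt_of_lt_of_le hCe hcC
    calc π = (π/ε) * ε := by field_simp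
      _ < (c:ℝ) * ε := by
          apply mul_lt_mul_of_pos_right this hε
      _ = ε * (c:ℝ) := by ring
  have hfin : t/8 < ε := by
    rw [htdef, div_div]
    rw [div_lt_iff₀ (by positivity)]
    nlinarith
  exact lt_of_le_of_lt hmain hfin
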